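/- Let N ≥ 5, set 2** = 2N/(N−4), let g : ℝ → ℝ be continuous and odd with limsup_{s→0} g(s)/s = −m for some m > 0 and lim_{s→+∞} g(s)/s^{2**−1} = 0, and fix m' ∈ (0, m) and q ∈ (2, 2**). Then lim_{s→+∞} h(s)/s^{2**−1} = lim_{s→+∞} h̄(s)/s^{2**−1} = 0 and lim_{s→+∞} H(s)/s^{2**} = lim_{s→+∞} H̄(s)/s^{2**} = 0. -/

import Mathlib

open MeasureTheory Real Filter

/-- `h(s) = (m's + g(s))₊` for `s ≥ 0`, extended as an odd function for `s < 0`. -/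
noncomputable def hfun (g : ℝ → ℝ) (m' : ℝ) (s : ℝ) : ℝ :=
  if 0 ≤ s then max (m' * s + g s) 0 else -max (m' * (-s) + g (-s)) 0

/-- `h̄(s) = s^{q-1} sup_{0<t≤s} h(t)/t^{q-1}` for `s > 0`, `h̄(0)=0`,
extended as an odd function for `s < 0`. -/
noncomputable def hbar (g : ℝ → ℝ) (m' q : ℝ) (s : ℝ) : ℝ :=
  if 0 < s then s ^ (q - 1) * sSup ((fun t => hfun g m' t / t ^ (q - 1)) '' Set.Ioc 0 s)
  else if s < 0 then
    -((-s) ^ (q - 1) * sSup ((fun t => hfun g m' t / t ^ (q - 1)) '' Set.Ioc 0 (-s)))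
  else 0

/-- `H(s) = ∫₀ˢ h(t) dt`. -/
noncomputable def Hfun (g : ℝ → ℝ) (m' : ℝ) (s : ℝ) : ℝ :=
  ∫ t in (0 : ℝ)..s, hfun g m' t

/-- `H̄(s) = ∫₀ˢ h̄(t) dt`. -/
noncomputable def Hbar (g : ℝ → ℝ) (m' q : ℝ) (s : ℝ) : ℝ :=
  ∫ t in (0 : ℝ)..s, hbar g m' q t

lemma intL (f : ℝ → ℝ) (p : ℝ) (hp : 0 < p)
    (hnn : ∀ s, 0 ≤ s → 0 ≤ f s)
    (hint : ∀ b, 0 ≤ b → IntervalIntegrable f volume 0 b)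
    (hlim : Tendsto (fun s => f s / s ^ p) atTop (nhds 0)) :
    Tendsto (fun s => (∫ t in (0:ℝ)..s, f t) / s ^ (p+1)) atTop (nhds 0) := by
  have hp1 : (0:ℝ) < p + 1 := by linarith
  rw [tendsto_order]
  constructor
  · intro a ha
    filter_upwards [eventually_ge_atTop (0:ℝ)] with s hs
    have h1 : 0 ≤ ∫ t in (0:ℝ)..s, f t :=
      intervalIntegral.integral_nonneg hs (fun t ht => hnn t ht.1)
    have h2 : 0 ≤ s ^ (p+1) := rpow_nonneg hs _
    exact lt_of_lt_of_le ha (div_nonneg h1 h2)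
  · intro a ha
    set ε := a/3 with hεdef
    have hε : 0 < ε := by positivity
    have h1 : ∀ᶠ s in atTop, f s / s ^ p < ε := hlim.eventually_lt_const hε
    obtain ⟨M0, hM0⟩ := eventually_atTop.1 h1
    set M := max M0 1 with hMdef
    have hM1 : (1:ℝ) ≤ M := le_max_right _ _
    have hM0' : (0:ℝ) ≤ M := by linarith
    set C := ∫ t in (0:ℝ)..M, f t with hCdef
    have hC : 0 ≤ C :=
      intervalIntegral.integral_nonneg hM0' (fun t ht => hnn t ht.1)
    have htend : Tendsto (fun s : ℝ => C * (s ^ (p+1))⁻¹) atTop (nhds 0) := by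
      simpa using (Tendsto.const_mul C ((tendsto_rpow_atTop hp1).inv_tendsto_atTop))
    have h2 : ∀ᶠ s in atTop, C * (s ^ (p+1))⁻¹ < ε := htend.eventually_lt_const hε
    filter_upwards [eventually_ge_atTop M, h2] with s hsM h2s
    have hs0 : (0:ℝ) < s := by linarith
    have hspos : (0:ℝ) < s ^ (p+1) := rpow_pos_of_pos hs0 _
    have hIMs : IntervalIntegrable f volume M s :=
      ((hint M hM0').symm.trans (hint s hs0.le))
    have hsplit : (∫ t in (0:ℝ)..s, f t) = C + ∫ t in M..s, f t := by
      rw [hCdef]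
      exact (intervalIntegral.integral_add_adjacent_intervals (hint M hM0') hIMs).symm
    have hbound : (∫ t in M..s, f t) ≤ (s - M) * (ε * s ^ p) := by
      have h3 : (∫ t in M..s, f t) ≤ ∫ _t in M..s, ε * s ^ p := by
        apply intervalIntegral.integral_mono_on hsM hIMs intervalIntegrable_const
        intro t ht
        have ht0 : (0:ℝ) < t := lt_of_lt_of_le (by linarith) ht.1
        have htp : (0:ℝ) < t ^ p := rpow_pos_of_pos ht0 _
        have := hM0 t (le_trans (le_max_left _ _) ht.1)
        have h4 : f t ≤ ε * t ^ p := by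
          rw [div_lt_iff₀ htp] at this; linarith
        have h5 : t ^ p ≤ s ^ p := rpow_le_rpow ht0.le ht.2 hp.le
        nlinarith
      rw [intervalIntegral.integral_const, smul_eq_mul] at h3
      linarith
    have hkey : (∫ t in (0:ℝ)..s, f t) ≤ C + ε * s ^ (p+1) := by
      have h6 : (s - M) * (ε * s ^ p) ≤ s * (ε * s ^ p) := by
        have : (0:ℝ) ≤ ε * s ^ p := by positivity
        nlinarith
      have h7 : s * (ε * s ^ p) = ε * s ^ (p+1) := by
        rw [rpow_add hs0, rpow_one]; ring
      rw [hsplit]; nlinarith [hbound]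
    calc (∫ t in (0:ℝ)..s, f t) / s ^ (p+1) ≤ (C + ε * s ^ (p+1)) / s ^ (p+1) := by
          gcongr
      _ = C * (s ^ (p+1))⁻¹ + ε := by field_simp
      _ < ε + ε := by linarith
      _ < a := by rw [hεdef]; linarith

theorem stmt_16 (N : ℕ) (hN : 5 ≤ N)
    (g : ℝ → ℝ) (hg : Continuous g) (hodd : ∀ s, g (-s) = -g s)
    (m : ℝ) (hm : 0 < m)
    (hlim : Filter.limsup (fun s => g s / s) (nhdsWithin 0 {0}ᶜ) = -m)
    (hginf : Filter.Tendsto (fun s : ℝ => g s / s ^ (2 * N / ((N : ℝ) - 4) - 1))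
      Filter.atTop (nhds 0))
    (m' q : ℝ) (hm' : m' ∈ Set.Ioo 0 m)
    (hq : q ∈ Set.Ioo 2 (2 * N / ((N : ℝ) - 4))) :
    Filter.Tendsto (fun s : ℝ => hfun g m' s / s ^ (2 * N / ((N : ℝ) - 4) - 1))
        Filter.atTop (nhds 0) ∧
      Filter.Tendsto (fun s : ℝ => hbar g m' q s / s ^ (2 * N / ((N : ℝ) - 4) - 1))
        Filter.atTop (nhds 0) ∧
      Filter.Tendsto (fun s : ℝ => Hfun g m' s / s ^ (2 * N / ((N : ℝ) - 4)))
        Filter.atTop (nhds 0) ∧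
      Filter.Tendsto (fun s : ℝ => Hbar g m' q s / s ^ (2 * N / ((N : ℝ) - 4)))
        Filter.atTop (nhds 0) := by
  have hN4 : (0:ℝ) < (N:ℝ) - 4 := by
    have : (5:ℝ) ≤ (N:ℝ) := by exact_mod_cast hN
    linarith
  set p : ℝ := 2 * N / ((N : ℝ) - 4) - 1 with hpdef
  have h2s : 2 < 2 * (N:ℝ) / ((N : ℝ) - 4) := by
    rw [lt_div_iff₀ hN4]; linarith
  have hp : 1 < p := by rw [hpdef]; linarith
  have hp0 : 0 < p := by linarith
  have hexp : 2 * (N:ℝ) / ((N : ℝ) - 4) = p + 1 := by rw [hpdef]; ring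
  have hq2 : 2 < q := hq.1
  have hq10 : 0 < q - 1 := by linarith
  have hr : 0 < p - (q - 1) := by
    have := hq.2; rw [hpdef]; linarith
  set r : ℝ := p - (q - 1) with hrdef
  -- basic facts about hfun
  have hfun_eq : ∀ t : ℝ, 0 ≤ t → hfun g m' t = max (m' * t + g t) 0 :=
    fun t ht => if_pos ht
  have hfun_nonneg : ∀ t : ℝ, 0 ≤ t → 0 ≤ hfun g m' t := by
    intro t ht; rw [hfun_eq t ht]; exact le_max_right _ _
  -- h vanishes near 0
  have hbdd0 : IsBoundedUnder (· ≤ ·) (nhdsWithin (0:ℝ) {0}ᶜ) (fun s => g s / s) := by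
    by_contra hb
    have he : {a : ℝ | ∀ᶠ s in nhdsWithin (0:ℝ) {0}ᶜ, g s / s ≤ a} = ∅ := by
      ext a
      simp only [Set.mem_setOf_eq, Set.mem_empty_iff_false, iff_false]
      intro h
      exact hb ⟨a, eventually_map.2 h⟩
    rw [limsup_eq, he, Real.sInf_empty] at hlim
    linarith
  have hev : ∀ᶠ s in nhdsWithin (0:ℝ) {0}ᶜ, g s / s < -m' := by
    apply Filter.eventually_lt_of_limsup_lt _ hbdd0
    rw [hlim]; linarith [hm'.2]
  rw [eventually_nhdsWithin_iff, Metric.eventually_nhds_iff] at hev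
  obtain ⟨δ₀, hδ₀, hδ₀'⟩ := hev
  set δ : ℝ := δ₀ / 2 with hδdef
  have hδ0 : 0 < δ := by positivity
  have hδ : ∀ t : ℝ, 0 < t → t ≤ δ → hfun g m' t = 0 := by
    intro t ht htδ
    have h1 : g t / t < -m' := by
      apply hδ₀'
      · rw [Real.dist_eq, sub_zero, abs_of_pos ht]; rw [hδdef] at htδ; linarith
      · exact ne_of_gt ht
    rw [div_lt_iff₀ ht] at h1
    rw [hfun_eq t ht.le, max_eq_right]
    nlinarith
  -- Part 1
  have T1 : Filter.Tendsto (fun s : ℝ => hfun g m' s / s ^ p) Filter.atTop (nhds 0) := by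
    have e1 : Tendsto (fun s : ℝ => m' * s / s ^ p) atTop (nhds 0) := by
      have e1a : Tendsto (fun s : ℝ => m' * (s ^ (p-1))⁻¹) atTop (nhds 0) := by
        simpa using (Tendsto.const_mul m'
          ((tendsto_rpow_atTop (by linarith : (0:ℝ) < p - 1)).inv_tendsto_atTop))
      apply e1a.congr'
      filter_upwards [eventually_gt_atTop (0:ℝ)] with s hs
      have hthis : s ^ p = s ^ (p - 1) * s := by
        rw [← Real.rpow_add_one (ne_of_gt hs)]; ring_nf
      have hs1 : s ^ (p-1) ≠ 0 := ne_of_gt (rpow_pos_of_pos hs _)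
      rw [hthis]
      field_simp
    have e2 : Tendsto (fun s : ℝ => (m' * s + g s) / s ^ p) atTop (nhds 0) := by
      have := e1.add hginf
      simp only [add_zero] at this
      apply this.congr
      intro s; rw [add_div]
    have e3 : Tendsto (fun s : ℝ => |(m' * s + g s) / s ^ p|) atTop (nhds 0) := by
      simpa using e2.abs
    refine squeeze_zero' ?_ ?_ e3
    · filter_upwards [eventually_gt_atTop (0:ℝ)] with s hs
      exact div_nonneg (hfun_nonneg s hs.le) (rpow_nonneg hs.le _)
    · filter_upwards [eventually_gt_atTop (0:ℝ)] with s hs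
      have hsp : (0:ℝ) < s ^ p := rpow_pos_of_pos hs _
      have hle : hfun g m' s ≤ |m' * s + g s| := by
        rw [hfun_eq s hs.le]; exact max_le (le_abs_self _) (abs_nonneg _)
      calc hfun g m' s / s ^ p ≤ |m' * s + g s| / s ^ p := by gcongr
        _ = |(m' * s + g s) / s ^ p| := by rw [abs_div, abs_of_pos hsp]
  -- sup function facts
  set φ : ℝ → ℝ := fun t => hfun g m' t / t ^ (q - 1) with hφdef
  have φ_nonneg : ∀ t : ℝ, 0 < t → 0 ≤ φ t := by
    intro t ht
    exact div_nonneg (hfun_nonneg t ht.le) (rpow_nonneg ht.le _)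
  have φδ : ∀ t : ℝ, 0 < t → t ≤ δ → φ t = 0 := by
    intro t ht htδ
    rw [hφdef]; simp only
    rw [hδ t ht htδ, zero_div]
  have hbddA : ∀ s : ℝ, 0 < s → BddAbove (φ '' Set.Ioc 0 s) := by
    intro s hs
    rcases le_or_gt s δ with h | h
    · refine ⟨0, ?_⟩
      rintro x ⟨t, ht, rfl⟩
      rw [φδ t ht.1 (ht.2.trans h)]
    · have hc : ContinuousOn φ (Set.Icc δ s) := by
        apply ContinuousOn.div
        · apply ContinuousOn.congr
            (((continuous_const.mul continuous_id).add hg).max continuous_const).continuousOn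
          intro t ht
          exact hfun_eq t (le_trans hδ0.le ht.1)
        · exact continuousOn_id.rpow_const
            (fun t ht => Or.inl (ne_of_gt (lt_of_lt_of_le hδ0 ht.1)))
        · intro t ht
          exact ne_of_gt (rpow_pos_of_pos (lt_of_lt_of_le hδ0 ht.1) _)
      obtain ⟨B, hB⟩ := isCompact_Icc.bddAbove_image hc
      refine ⟨max B 0, ?_⟩
      rintro x ⟨t, ht, rfl⟩
      rcases le_or_gt t δ with h2 | h2
      · rw [φδ t ht.1 h2]; exact le_max_right _ _
      · exact le_trans (hB ⟨t, ⟨h2.le, ht.2⟩, rfl⟩) (le_max_left _ _)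
  set S : ℝ → ℝ := fun s => sSup (φ '' Set.Ioc 0 s) with hSdef
  have hne : ∀ s : ℝ, 0 < s → (φ '' Set.Ioc 0 s).Nonempty :=
    fun s hs => ⟨φ s, ⟨s, ⟨hs, le_refl s⟩, rfl⟩⟩
  have hS_nonneg : ∀ s : ℝ, 0 < s → 0 ≤ S s := by
    intro s hs
    have hmem : min δ s ∈ Set.Ioc 0 s := ⟨lt_min hδ0 hs, min_le_right _ _⟩
    have h1 : φ (min δ s) = 0 := φδ _ (lt_min hδ0 hs) (min_le_left _ _)
    have h2 : φ (min δ s) ≤ S s := le_csSup (hbddA s hs) ⟨_, hmem, rfl⟩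
    linarith [h1 ▸ h2]
  have hS_mono : ∀ s1 s2 : ℝ, 0 < s1 → s1 ≤ s2 → S s1 ≤ S s2 := by
    intro s1 s2 h1 h12
    exact csSup_le_csSup (hbddA s2 (lt_of_lt_of_le h1 h12)) (hne s1 h1)
      (Set.image_mono (Set.Ioc_subset_Ioc_right h12))
  have hbar_pos : ∀ s : ℝ, 0 < s → hbar g m' q s = s ^ (q - 1) * S s :=
    fun s hs => if_pos hs
  have hbar_nonneg : ∀ s : ℝ, 0 ≤ s → 0 ≤ hbar g m' q s := by
    intro s hs
    rcases eq_or_lt_of_le hs with h | h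
    · rw [hbar]; simp [← h]
    · rw [hbar_pos s h]
      exact mul_nonneg (rpow_nonneg h.le _) (hS_nonneg s h)
  have hbar_mono : MonotoneOn (hbar g m' q) (Set.Ici 0) := by
    intro a ha b hb hab
    rcases eq_or_lt_of_le (Set.mem_Ici.mp ha) with h | h
    · rw [hbar]; simp only [← h]
      simp only [lt_irrefl, if_false]
      exact hbar_nonneg b hb
    · rw [hbar_pos a h, hbar_pos b (lt_of_lt_of_le h hab)]
      exact mul_le_mul (rpow_le_rpow h.le hab hq10.le) (hS_mono a b h hab)
        (hS_nonneg a h) (rpow_nonneg (Set.mem_Ici.mp hb) _)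
  -- Part 2
  have T2 : Filter.Tendsto (fun s : ℝ => hbar g m' q s / s ^ p) Filter.atTop (nhds 0) := by
    rw [tendsto_order]
    constructor
    · intro a ha
      filter_upwards [eventually_gt_atTop (0:ℝ)] with s hs
      exact lt_of_lt_of_le ha
        (div_nonneg (hbar_nonneg s hs.le) (rpow_nonneg hs.le _))
    · intro a ha
      set ε := a/3 with hεdef
      have hε : 0 < ε := by positivity
      have h1 : ∀ᶠ t in atTop, hfun g m' t / t ^ p < ε := T1.eventually_lt_const hε
      obtain ⟨M0, hM0⟩ := eventually_atTop.1 h1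
      set M := max M0 1 with hMdef
      have hM1 : (1:ℝ) ≤ M := le_max_right _ _
      have hMpos : (0:ℝ) < M := by linarith
      set C := S M with hCdef
      have hC : 0 ≤ C := hS_nonneg M hMpos
      have htend : Tendsto (fun s : ℝ => C * (s ^ r)⁻¹) atTop (nhds 0) := by
        simpa using (Tendsto.const_mul C ((tendsto_rpow_atTop hr).inv_tendsto_atTop))
      have h2 : ∀ᶠ s in atTop, C * (s ^ r)⁻¹ < ε := htend.eventually_lt_const hε
      filter_upwards [eventually_ge_atTop M, h2] with s hsM h2s
      have hs0 : (0:ℝ) < s := by linarith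
      have hsr : (0:ℝ) < s ^ r := rpow_pos_of_pos hs0 _
      have hkey : S s ≤ C + ε * s ^ r := by
        apply csSup_le (hne s hs0)
        rintro x ⟨t, ht, rfl⟩
        rcases le_or_gt t M with h3 | h3
        · have h4 : φ t ≤ C := le_csSup (hbddA M hMpos) ⟨t, ⟨ht.1, h3⟩, rfl⟩
          have h9 : 0 ≤ ε * s ^ r := mul_nonneg hε.le (rpow_nonneg hs0.le r)
          linarith
        · have ht0 : (0:ℝ) < t := lt_trans hMpos h3
          have htq : (0:ℝ) < t ^ (q-1) := rpow_pos_of_pos ht0 _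
          have htp : (0:ℝ) < t ^ p := rpow_pos_of_pos ht0 _
          have h5 : hfun g m' t / t ^ p < ε := hM0 t (le_trans (le_max_left _ _) h3.le)
          have h6 : hfun g m' t ≤ ε * t ^ p := by
            rw [div_lt_iff₀ htp] at h5; linarith
          have h7 : φ t ≤ ε * t ^ r := by
            have he : ε * t ^ r = ε * t ^ p / t ^ (q - 1) := by
              rw [hrdef, Real.rpow_sub ht0]; ring
            rw [he]
            calc φ t = hfun g m' t / t ^ (q-1) := rfl
              _ ≤ ε * t ^ p / t ^ (q-1) := by gcongr
          have h8 : t ^ r ≤ s ^ r := rpow_le_rpow ht0.le ht.2 hr.le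
          calc φ t ≤ ε * t ^ r := h7
            _ ≤ ε * s ^ r := mul_le_mul_of_nonneg_left h8 hε.le
            _ ≤ C + ε * s ^ r := le_add_of_nonneg_left hC
      have heq : hbar g m' q s / s ^ p = S s / s ^ r := by
        rw [hbar_pos s hs0]
        have : s ^ p = s ^ (q-1) * s ^ r := by
          rw [← Real.rpow_add hs0, hrdef]; ring_nf
        rw [this, mul_div_mul_left _ _ (ne_of_gt (rpow_pos_of_pos hs0 _))]
      rw [heq]
      calc S s / s ^ r ≤ (C + ε * s ^ r) / s ^ r := by gcongr
        _ = C * (s ^ r)⁻¹ + ε := by field_simp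
        _ < ε + ε := by linarith
        _ < a := by rw [hεdef]; linarith
  -- integrability
  have hfun_int : ∀ b : ℝ, 0 ≤ b → IntervalIntegrable (hfun g m') volume 0 b := by
    intro b hb
    apply ContinuousOn.intervalIntegrable
    apply ContinuousOn.congr
      (((continuous_const.mul continuous_id).add hg).max continuous_const).continuousOn
    intro t ht
    rw [Set.uIcc_of_le hb] at ht
    exact hfun_eq t ht.1
  have hbar_int : ∀ b : ℝ, 0 ≤ b → IntervalIntegrable (hbar g m' q) volume 0 b := by
    intro b hb
    apply MonotoneOn.intervalIntegrable
    apply hbar_mono.mono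
    rw [Set.uIcc_of_le hb]
    exact fun x hx => hx.1
  have T3 := intL (hfun g m') p hp0 hfun_nonneg hfun_int T1
  have T4 := intL (hbar g m' q) p hp0 hbar_nonneg hbar_int T2
  refine ⟨T1, T2, ?_, ?_⟩
  · rw [show 2 * (N:ℝ) / ((N : ℝ) - 4) = p + 1 from hexp]
    exact T3
  · rw [show 2 * (N:ℝ) / ((N : ℝ) - 4) = p + 1 from hexp]
    exact T4
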